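/- Let k be a field of characteristic zero, let f ∈ k((t)) be a formal Laurent series, and let s ∈ k[[t]] be a power series of order exactly 1 (s(0) = 0 and s'(0) ≠ 0). Then the residue of the Laurent series f(s(t)) · s'(t) (the substitution of s into f, multiplied by the derivative of s) equals the residue of f. In other words, the formal residue is invariant under change of coordinate. -/

import Mathlib

/-- Formal derivative of a Laurent series: `(lderiv f).coeff n = (n+1) • f.coeff (n+1)`. -/
noncomputable def LaurentSeries.lderiv {K : Type*} [Field K] (f : LaurentSeries K) :
    LaurentSeries K where
  coeff n := (n + 1 : ℤ) • f.coeff (n + 1)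
  isPWO_support' := by
    have h : (Function.support fun n : ℤ => (n + 1 : ℤ) • f.coeff (n + 1)) ⊆
        (fun n : ℤ => n - 1) '' f.support := by
      intro n hn
      refine ⟨n + 1, ?_, by ring⟩
      intro h0
      simp [h0] at hn
    exact (f.isPWO_support.image_of_monotone (fun a b hab => by omega)).mono h

open PowerSeries HahnSeries in
private lemma residue_aux
    {K : Type*} [Field K] [CharZero K]
    (s : PowerSeries K)
    (hs0 : PowerSeries.constantCoeff s = 0)
    (hs1 : PowerSeries.coeff 1 s ≠ 0) :
    ∀ n : ℤ, n ≤ -1 →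
      (((HahnSeries.ofPowerSeries ℤ K s) ^ n *
          HahnSeries.ofPowerSeries ℤ K s.derivativeFun).coeff (-1)) =
        if n = -1 then 1 else 0 := by
  classical
  obtain ⟨u, hu⟩ : PowerSeries.X ∣ s := PowerSeries.X_dvd_iff.2 hs0
  have hu0 : PowerSeries.constantCoeff u ≠ 0 := by
    have h1 : PowerSeries.coeff 1 s = PowerSeries.coeff 0 u := by
      rw [hu]; exact PowerSeries.coeff_succ_X_mul 0 u
    rwa [h1, PowerSeries.coeff_zero_eq_constantCoeff] at hs1
  set w := u⁻¹ with hwdef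
  have huw : u * w = 1 := PowerSeries.mul_inv_cancel u hu0
  have hX : (PowerSeries.X : PowerSeries K).derivativeFun = 1 := PowerSeries.derivative_X
  -- derivative of the inverse
  have hw' : w.derivativeFun = -(w ^ 2 * u.derivativeFun) := by
    have h := congrArg PowerSeries.derivativeFun huw
    rw [PowerSeries.derivativeFun_mul, PowerSeries.derivativeFun_one, smul_eq_mul,
      smul_eq_mul] at h
    have h2 : u * w.derivativeFun = -(w * u.derivativeFun) := by linear_combination h
    calc w.derivativeFun = (u * w) * w.derivativeFun := by rw [huw, one_mul]
      _ = w * (u * w.derivativeFun) := by ring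
      _ = w * (-(w * u.derivativeFun)) := by rw [h2]
      _ = -(w ^ 2 * u.derivativeFun) := by ring
  intro n hn
  obtain ⟨m, rfl, hm⟩ : ∃ m : ℕ, n = -(m : ℤ) ∧ 1 ≤ m := ⟨(-n).toNat, by omega, by omega⟩
  set S := HahnSeries.ofPowerSeries ℤ K s with hS
  have hSpow : S ^ (m : ℕ) = single ((m : ℕ) : ℤ) 1 * HahnSeries.ofPowerSeries ℤ K (u ^ m) := by
    rw [hS, ← map_pow, hu, mul_pow, map_mul, map_pow, ofPowerSeries_X, single_pow]
    simp
  have hinv : S ^ (-(m : ℤ)) = single (-(m : ℤ)) 1 * HahnSeries.ofPowerSeries ℤ K (w ^ m) := by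
    rw [zpow_neg, zpow_natCast, hSpow]
    refine inv_eq_of_mul_eq_one_right ?_
    have h3 : (single ((m : ℕ) : ℤ) 1 * HahnSeries.ofPowerSeries ℤ K (u ^ m)) *
        (single (-(m : ℤ)) 1 * HahnSeries.ofPowerSeries ℤ K (w ^ m)) =
        (single ((m : ℕ) : ℤ) (1 : K) * single (-(m : ℤ)) 1) *
        (HahnSeries.ofPowerSeries ℤ K (u ^ m) * HahnSeries.ofPowerSeries ℤ K (w ^ m)) := by
      ring
    rw [h3, single_mul_single, ← map_mul, ← mul_pow, huw, one_pow, map_one, mul_one,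
      mul_one, show ((m : ℕ) : ℤ) + -(m : ℤ) = 0 by ring, single_zero_one]
  rw [hinv, mul_assoc, ← map_mul]
  have hcoeff : (single (-(m : ℤ)) 1 *
      HahnSeries.ofPowerSeries ℤ K (w ^ m * s.derivativeFun)).coeff (-1) =
      PowerSeries.coeff (m - 1) (w ^ m * s.derivativeFun) := by
    rw [show (-1 : ℤ) = ((m : ℤ) - 1) + (-(m : ℤ)) by ring, coeff_single_mul_add, one_mul,
      show ((m : ℤ) - 1) = ((m - 1 : ℕ) : ℤ) by omega, ofPowerSeries_apply_coeff]
  rw [hcoeff]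
  have hwu : w ^ m * u = w ^ (m - 1) := by
    conv_lhs => rw [show m = (m - 1) + 1 by omega]
    rw [pow_succ, mul_assoc, mul_comm w u, huw, mul_one]
  have hs' : w ^ m * s.derivativeFun = w ^ (m - 1) + PowerSeries.X * (w ^ m * u.derivativeFun) := by
    rw [hu, PowerSeries.derivativeFun_mul, hX, smul_eq_mul, smul_eq_mul, mul_one, ← hwu]
    ring
  rw [hs']
  rcases Nat.exists_eq_add_of_le hm with ⟨k, hk⟩
  rcases Nat.eq_zero_or_pos k with hk0 | hkpos
  · -- m = 1
    subst hk0
    subst hk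
    norm_num
  · -- m = k + 1, k ≥ 1 : write k = j + 1, m = j + 2
    obtain ⟨j, rfl⟩ : ∃ j, k = j + 1 := ⟨k - 1, by omega⟩
    subst hk
    rw [if_neg (by omega)]
    have hm1 : 1 + (j + 1) - 1 = j + 1 := by omega
    rw [hm1, map_add, PowerSeries.coeff_succ_X_mul]
    -- use the derivative identity
    have hD : PowerSeries.derivativeFun (w ^ (j + 1)) =
        (j + 1 : ℕ) • (w ^ j • PowerSeries.derivativeFun w) :=
      Derivation.leibniz_pow (PowerSeries.derivative K) w (j + 1)
    have hcoeffD := congrArg (fun g => PowerSeries.coeff j g) hD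
    have e : PowerSeries.coeff j (PowerSeries.derivativeFun (w ^ (j + 1))) =
        PowerSeries.coeff (j + 1) (w ^ (j + 1)) * ((j : K) + 1) :=
      PowerSeries.coeff_derivative _ _
    simp only [e] at hcoeffD
    rw [hw'] at hcoeffD
    have hpow2 : w ^ j • -(w ^ 2 * u.derivativeFun) = -(w ^ (1 + (j + 1)) * u.derivativeFun) := by
      rw [smul_eq_mul]; ring
    rw [hpow2] at hcoeffD
    have hb : PowerSeries.coeff j ((j + 1 : ℕ) • -(w ^ (1 + (j + 1)) * u.derivativeFun)) =
        -(((j + 1 : ℕ) : K) * PowerSeries.coeff j (w ^ (1 + (j + 1)) * u.derivativeFun)) := by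
      rw [map_nsmul]
      simp [nsmul_eq_mul]
    rw [hb] at hcoeffD
    -- hcoeffD : a * (j+1) = -((j+1) * b)
    have hcne : ((j : K) + 1) ≠ 0 := by
      have h5 : ((j + 1 : ℕ) : K) ≠ 0 := Nat.cast_ne_zero.2 (Nat.succ_ne_zero j)
      push_cast at h5; exact h5
    have hab : PowerSeries.coeff (j + 1) (w ^ (j + 1)) =
        -(PowerSeries.coeff j (w ^ (1 + (j + 1)) * u.derivativeFun)) := by
      have h4 : PowerSeries.coeff (j + 1) (w ^ (j + 1)) * ((j : K) + 1) =
          (-(PowerSeries.coeff j (w ^ (1 + (j + 1)) * u.derivativeFun))) * ((j : K) + 1) := by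
        push_cast at hcoeffD; linear_combination hcoeffD
      exact mul_right_cancel₀ hcne h4
    rw [hab]; ring

/-- invariance of the formal residue under change of coordinate.
If `f` is a Laurent series (with coefficients vanishing below `N`), `s` is a power
series of order exactly `1`, and `F = f(s(t))·s'(t)` is the substitution of `s` into
`f` multiplied by the derivative of `s` (expressed coefficientwise: the coefficient of
`t^m` in `F` is the (finite) sum over `n` of `f_n` times the `t^m`-coefficient of
`s^n·s'`), then `F` and `f` have the same residue. -/
theorem residue_invariant_under_coordinate_change
    {K : Type*} [Field K] [CharZero K]
    (f F : LaurentSeries K) (N : ℤ) (hN : ∀ i < N, f.coeff i = 0)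
    (s : PowerSeries K)
    (hs0 : PowerSeries.constantCoeff s = 0)
    (hs1 : PowerSeries.coeff 1 s ≠ 0)
    (hF : ∀ m : ℤ, F.coeff m =
      ∑ n ∈ Finset.Icc N m, f.coeff n *
        (((HahnSeries.ofPowerSeries ℤ K s) ^ n *
          HahnSeries.ofPowerSeries ℤ K s.derivativeFun).coeff m)) :
    F.coeff (-1) = f.coeff (-1) := by
  have key := residue_aux s hs0 hs1
  rw [hF]
  have hsum : ∀ n ∈ Finset.Icc N (-1 : ℤ), f.coeff n *
      (((HahnSeries.ofPowerSeries ℤ K s) ^ n *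
        HahnSeries.ofPowerSeries ℤ K s.derivativeFun).coeff (-1)) =
      if n = -1 then f.coeff (-1) else 0 := by
    intro n hn
    rw [key n (Finset.mem_Icc.1 hn).2]
    split_ifs with h
    · rw [h, mul_one]
    · rw [mul_zero]
  rw [Finset.sum_congr rfl hsum, Finset.sum_ite_eq' (Finset.Icc N (-1 : ℤ)) (-1 : ℤ)
      (fun _ => f.coeff (-1))]
  split_ifs with h
  · rfl
  · rw [Finset.mem_Icc] at h
    exact (hN (-1) (by omega)).symm
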